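/- arXiv:2307.02638 — 4 statements merged into one kernel-verified Lean document; each statement's English description precedes it below -/
import Mathlib

section
/- Let K be a field of characteristic zero and let f_{m,n} ∈ K (m, n ≥ 0) with f_{0,0} = 0 and f_{0,1} ≠ 0. Let φ_n = Σ_{m≥0} f_{m,n} x^m/m! ∈ K[[x]], let g = Σ_{n≥1} φ_n Y^n/n! ∈ K[[x]][[Y]], and let ḡ be the (unique) compositional inverse of g. Let y ∈ K[[x]] be the unique power series with zero constant term satisfying F(x, y(x)) = 0, where F = Σ_{m,n≥0} f_{m,n} x^m y^n/(m! n!). Then y = ḡ(−φ_0), i.e., y equals the substitution of the power series −φ_0 (which has zero constant term) into ḡ. -/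
open PowerSeries

/-- First entry of a tuple (`0` if the tuple is empty). -/
def firstEntry {k : ℕ} (r : Fin k → ℕ) : ℕ := if h : 0 < k then r ⟨0, h⟩ else 0

/-- The partial Bell polynomial `B_{n,k}` evaluated at `x 1, x 2, …, x (n-k+1)` over a
`ℚ`-algebra; it vanishes when `n < k`. -/
noncomputable def bellPoly {R : Type*} [CommRing R] [Algebra ℚ R] (n k : ℕ) (x : ℕ → R) : R :=
  ∑ r ∈ Finset.filter
      (fun r : Fin n → ℕ => (∑ i, r i) = k ∧ (∑ i, (i.1 + 1) * r i) = n)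
      (Fintype.piFinset fun _ : Fin n => Finset.range (n + 1)),
    algebraMap ℚ R ((n.factorial : ℚ) /
        ∏ i : Fin n, ((r i).factorial * ((i.1 + 1).factorial : ℚ) ^ (r i))) *
      ∏ i : Fin n, x (i.1 + 1) ^ (r i)

/-- Composition `g ∘ h` of formal power series (the usual substitution of `h` into `g`,
intended for `h` with zero constant term). -/
noncomputable def psComp {R : Type*} [CommSemiring R] (g h : PowerSeries R) : PowerSeries R :=
  PowerSeries.mk fun n => ∑ k ∈ Finset.range (n + 1),
    PowerSeries.coeff k g * PowerSeries.coeff n (h ^ k)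

/-- Evaluation of `G ∈ K[[x]][[Y]]` at `a ∈ K[[x]]` (the usual substitution, intended for `a`
with zero constant term). -/
noncomputable def psEval {K : Type*} [CommSemiring K] (G : PowerSeries (PowerSeries K))
    (a : PowerSeries K) : PowerSeries K :=
  PowerSeries.mk fun N => ∑ k ∈ Finset.range (N + 1),
    PowerSeries.coeff N (PowerSeries.coeff k G * a ^ k)

/-- Substituting `y ∈ K[[x]]` for the second variable of `F ∈ K[[x,y]]` (the usual
substitution of multivariate power series, intended for `y` with zero constant term). -/
noncomputable def substY {K : Type*} [CommSemiring K] (F : MvPowerSeries (Fin 2) K)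
    (y : PowerSeries K) : PowerSeries K :=
  PowerSeries.mk fun N => ∑ m ∈ Finset.range (N + 1), ∑ n ∈ Finset.range (N + 1),
    MvPowerSeries.coeff (Finsupp.single 0 m + Finsupp.single 1 n) F *
      PowerSeries.coeff (N - m) (y ^ n)

/-- `F = Σ_{m,n} f_{m,n} x^m y^n/(m! n!) ∈ K[[x,y]]`. -/
noncomputable def Fser {K : Type*} [Field K] (f : ℕ → ℕ → K) : MvPowerSeries (Fin 2) K :=
  fun s => (((s 0).factorial : K) * ((s 1).factorial : K))⁻¹ * f (s 0) (s 1)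

/-- `φ_n = Σ_{m≥0} f_{m,n} x^m/m! ∈ K[[x]]`. -/
noncomputable def phiSer {K : Type*} [Field K] (f : ℕ → ℕ → K) (n : ℕ) : PowerSeries K :=
  PowerSeries.mk fun m => ((m.factorial : K))⁻¹ * f m n

/-- `g = Σ_{n≥1} φ_n Y^n/n! ∈ K[[x]][[Y]]`. -/
noncomputable def gSer {K : Type*} [Field K] (f : ℕ → ℕ → K) : PowerSeries (PowerSeries K) :=
  PowerSeries.mk fun n => if n = 0 then 0 else
    PowerSeries.C ((n.factorial : K))⁻¹ * phiSer f n

section Aux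
variable {K : Type*} [CommSemiring K]

lemma coeff_pow_zero_of_lt {a : PowerSeries K} (ha : constantCoeff a = 0)
    {n k : ℕ} (h : n < k) : coeff n (a ^ k) = 0 :=
  X_pow_dvd_iff.1 (pow_dvd_pow_of_dvd (X_dvd_iff.2 ha) k) n h

lemma coeff_mul_pow_zero_of_lt {a : PowerSeries K} (ha : constantCoeff a = 0)
    (c : PowerSeries K) {n k : ℕ} (h : n < k) : coeff n (c * a ^ k) = 0 :=
  X_pow_dvd_iff.1 (Dvd.dvd.mul_left (pow_dvd_pow_of_dvd (X_dvd_iff.2 ha) k) c) n h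

lemma coeff_eval (P : Polynomial (PowerSeries K)) {a : PowerSeries K}
    (ha : constantCoeff a = 0) {N M : ℕ} (hNM : N < M) :
    coeff N (P.eval a) = ∑ k ∈ Finset.range M, coeff N (P.coeff k * a ^ k) := by
  rw [Polynomial.eval_eq_sum_range, map_sum]
  rcases le_total (P.natDegree + 1) M with h | h
  · apply Finset.sum_subset (Finset.range_subset_range.2 h)
    intro k _ hk2
    have hk : P.natDegree + 1 ≤ k := le_of_not_gt fun hh => hk2 (Finset.mem_range.2 hh)
    rw [Polynomial.coeff_eq_zero_of_natDegree_lt (Nat.lt_of_succ_le hk), zero_mul, map_zero]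
  · symm
    apply Finset.sum_subset (Finset.range_subset_range.2 h)
    intro k _ hk2
    have hk : M ≤ k := le_of_not_gt fun hh => hk2 (Finset.mem_range.2 hh)
    exact coeff_mul_pow_zero_of_lt ha _ (lt_of_lt_of_le hNM hk)

lemma coeff_psEval {G : PowerSeries (PowerSeries K)} {a : PowerSeries K}
    (ha : constantCoeff a = 0) {N M : ℕ} (hNM : N < M) :
    coeff N (psEval G a) =
      ∑ k ∈ Finset.range M, coeff N (PowerSeries.coeff k G * a ^ k) := by
  rw [psEval, coeff_mk]
  apply Finset.sum_subset (Finset.range_subset_range.2 hNM)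
  intro k _ hk2
  have hk : N + 1 ≤ k := le_of_not_gt fun hh => hk2 (Finset.mem_range.2 hh)
  exact coeff_mul_pow_zero_of_lt ha _ (Nat.lt_of_succ_le hk)

lemma coeff_psEval_eq_eval_trunc {G : PowerSeries (PowerSeries K)} {a : PowerSeries K}
    (ha : constantCoeff a = 0) {N M : ℕ} (hNM : N < M) :
    coeff N (psEval G a) = coeff N ((trunc M G).eval a) := by
  rw [coeff_psEval ha hNM, coeff_eval _ ha hNM]
  refine Finset.sum_congr rfl fun k hk => ?_
  rw [coeff_trunc, if_pos (Finset.mem_range.1 hk)]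

lemma psEval_mul (G G' : PowerSeries (PowerSeries K)) {a : PowerSeries K}
    (ha : constantCoeff a = 0) :
    psEval (G * G') a = psEval G a * psEval G' a := by
  ext N
  rw [coeff_psEval_eq_eval_trunc ha (Nat.lt_succ_self N)]
  have htr : ∀ k, k < N + 1 → (trunc (N+1) (G * G')).coeff k
      = (trunc (N+1) G * trunc (N+1) G').coeff k := by
    intro k hk
    rw [coeff_trunc, if_pos hk, ← Polynomial.coeff_coe, Polynomial.coe_mul,
      ← coeff_mul_eq_coeff_trunc_mul_trunc G G' hk]
  have heval : coeff N ((trunc (N+1) (G * G')).eval a)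
      = coeff N ((trunc (N+1) G * trunc (N+1) G').eval a) := by
    rw [coeff_eval _ ha (Nat.lt_succ_self N), coeff_eval _ ha (Nat.lt_succ_self N)]
    exact Finset.sum_congr rfl fun k hk => by rw [htr k (Finset.mem_range.1 hk)]
  rw [heval, Polynomial.eval_mul, PowerSeries.coeff_mul, PowerSeries.coeff_mul]
  refine Finset.sum_congr rfl fun p hp => ?_
  have hpN := Finset.HasAntidiagonal.mem_antidiagonal.1 hp
  have h1 : p.1 < N + 1 := Nat.lt_succ_of_le (hpN ▸ Nat.le_add_right p.1 p.2)
  have h2 : p.2 < N + 1 := Nat.lt_succ_of_le (hpN ▸ Nat.le_add_left p.2 p.1)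
  rw [coeff_psEval_eq_eval_trunc ha h1, coeff_psEval_eq_eval_trunc ha h2]

lemma psEval_one (a : PowerSeries K) : psEval 1 a = 1 := by
  ext N
  rw [psEval, coeff_mk]
  rw [Finset.sum_eq_single 0]
  · simp
  · intro k _ hk
    rw [PowerSeries.coeff_one, if_neg hk, zero_mul, map_zero]
  · intro h; exact absurd (Finset.mem_range.2 (Nat.succ_pos N)) h

lemma psEval_pow (H : PowerSeries (PowerSeries K)) {a : PowerSeries K}
    (ha : constantCoeff a = 0) (j : ℕ) :
    psEval (H ^ j) a = (psEval H a) ^ j := by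
  induction j with
  | zero => simpa using psEval_one a
  | succ j ih => rw [pow_succ, pow_succ, psEval_mul _ _ ha, ih]

end Aux

section Aux2
variable {K : Type*} [CommSemiring K]


lemma coeff_mul_psEval (c : PowerSeries K) (G : PowerSeries (PowerSeries K)) {a : PowerSeries K}
    (ha : constantCoeff a = 0) (N : ℕ) :
    coeff N (c * psEval G a) =
      ∑ k ∈ Finset.range (N + 1),
        coeff N (c * (PowerSeries.coeff k G * a ^ k)) := by
  rw [PowerSeries.coeff_mul]
  have hstep : ∀ p ∈ Finset.HasAntidiagonal.antidiagonal N, coeff p.1 c * coeff p.2 (psEval G a)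
      = ∑ k ∈ Finset.range (N + 1),
          coeff p.1 c * coeff p.2 (PowerSeries.coeff k G * a ^ k) := by
    intro p hp
    have h2 : p.2 < N + 1 :=
      Nat.lt_succ_of_le ((Finset.HasAntidiagonal.mem_antidiagonal.1 hp) ▸ Nat.le_add_left p.2 p.1)
    rw [coeff_psEval ha h2, Finset.mul_sum]
  rw [Finset.sum_congr rfl hstep, Finset.sum_comm]
  exact Finset.sum_congr rfl fun k _ => (PowerSeries.coeff_mul _ _ _).symm

lemma psEval_psComp (G H : PowerSeries (PowerSeries K)) {y : PowerSeries K}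
    (hy : constantCoeff y = 0)
    (hH : PowerSeries.coeff 0 H = 0) :
    psEval (psComp G H) y = psEval G (psEval H y) := by
  have hH' : constantCoeff H = 0 := by
    rwa [← coeff_zero_eq_constantCoeff_apply]
  have hb : constantCoeff (psEval H y) = 0 := by
    rw [← coeff_zero_eq_constantCoeff_apply, psEval, coeff_mk]
    simp [hH]
  ext N
  rw [coeff_psEval hy (Nat.lt_succ_self N), coeff_psEval hb (Nat.lt_succ_self N)]
  have hL : ∀ k ∈ Finset.range (N + 1),
      coeff N (PowerSeries.coeff k (psComp G H) * y ^ k)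
      = ∑ j ∈ Finset.range (N + 1),
          coeff N (PowerSeries.coeff j G *
            PowerSeries.coeff k (H ^ j) * y ^ k) := by
    intro k hk
    rw [psComp, coeff_mk]
    have hext : ∑ j ∈ Finset.range (k + 1),
        PowerSeries.coeff j G * PowerSeries.coeff k (H ^ j)
        = ∑ j ∈ Finset.range (N + 1),
            PowerSeries.coeff j G * PowerSeries.coeff k (H ^ j) := by
      apply Finset.sum_subset (Finset.range_subset_range.2 (Finset.mem_range.1 hk))
      intro j _ hj
      have hkj : k < j := Nat.lt_of_succ_le
        (le_of_not_gt fun (hh : j < k + 1) => hj (Finset.mem_range.2 hh))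
      rw [coeff_pow_zero_of_lt hH' hkj, mul_zero]
    rw [hext, Finset.sum_mul, map_sum]
  rw [Finset.sum_congr rfl hL, Finset.sum_comm]
  refine Finset.sum_congr rfl fun j _ => ?_
  rw [← psEval_pow H hy j, coeff_mul_psEval _ _ hy]
  exact Finset.sum_congr rfl fun k _ => by rw [mul_assoc]

lemma psEval_X {y : PowerSeries K} (hy : constantCoeff y = 0) :
    psEval X y = y := by
  ext N
  rw [psEval, coeff_mk]
  rcases Nat.eq_zero_or_pos N with h | h
  · subst h
    rw [Finset.sum_range_one, pow_zero, mul_one, PowerSeries.coeff_X,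
      if_neg (by norm_num), map_zero, coeff_zero_eq_constantCoeff_apply, hy]
  · rw [Finset.sum_eq_single 1]
    · rw [PowerSeries.coeff_X, if_pos rfl, one_mul, pow_one]
    · intro k _ hk
      rw [PowerSeries.coeff_X, if_neg hk, zero_mul, map_zero]
    · intro hmem
      exact absurd (Finset.mem_range.2 (Nat.succ_lt_succ h)) hmem

end Aux2

lemma substY_eq {K : Type*} [Field K] (f : ℕ → ℕ → K) (y : PowerSeries K) :
    substY (Fser f) y = phiSer f 0 + psEval (gSer f) y := by
  ext N
  rw [map_add, substY, psEval, coeff_mk, coeff_mk, Finset.sum_comm]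
  set T : ℕ → K := fun n => ∑ m ∈ Finset.range (N + 1),
    ((m.factorial : K) * (n.factorial : K))⁻¹ * f m n * coeff (N - m) (y ^ n) with hT
  have h1 : ∀ n ∈ Finset.range (N + 1),
      (∑ m ∈ Finset.range (N + 1),
        MvPowerSeries.coeff (Finsupp.single 0 m + Finsupp.single 1 n) (Fser f) *
          PowerSeries.coeff (N - m) (y ^ n)) = T n := by
    intro n _
    refine Finset.sum_congr rfl fun m _ => ?_
    congr 1
    rw [MvPowerSeries.coeff_apply]
    simp [Fser, Finsupp.single_apply]
  have h2 : ∀ k ∈ Finset.range (N + 1),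
      coeff N (PowerSeries.coeff k (gSer f) * y ^ k)
        = if k = 0 then 0 else T k := by
    intro k _
    rw [gSer, coeff_mk]
    by_cases hk : k = 0
    · rw [if_pos hk, if_pos hk, zero_mul, map_zero]
    · rw [if_neg hk, if_neg hk, mul_assoc, PowerSeries.coeff_C_mul, PowerSeries.coeff_mul,
        Finset.Nat.sum_antidiagonal_eq_sum_range_succ_mk, Finset.mul_sum, hT]
      refine Finset.sum_congr rfl fun m _ => ?_
      rw [phiSer, coeff_mk, mul_inv]
      ring
  have h3 : T 0 = coeff N (phiSer f 0) := by
    simp only [hT, phiSer, coeff_mk]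
    rw [Finset.sum_eq_single N]
    · simp [Nat.sub_self]
    · intro m hm hmN
      have hne : N - m ≠ 0 := Nat.sub_ne_zero_of_lt
        (lt_of_le_of_ne (Nat.lt_succ_iff.1 (Finset.mem_range.1 hm)) hmN)
      rw [pow_zero, PowerSeries.coeff_one, if_neg hne, mul_zero]
    · intro h; exact absurd (Finset.mem_range.2 (Nat.lt_succ_self N)) h
  rw [Finset.sum_congr rfl h1, Finset.sum_congr rfl h2]
  have h4 : ∀ n ∈ Finset.range (N + 1),
      T n = (if n = 0 then coeff N (phiSer f 0) else 0) + (if n = 0 then 0 else T n) := by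
    intro n _
    by_cases hn : n = 0
    · subst hn; rw [if_pos rfl, if_pos rfl, add_zero, h3]
    · rw [if_neg hn, if_neg hn, zero_add]
  rw [Finset.sum_congr rfl h4, Finset.sum_add_distrib,
    Finset.sum_ite_eq' (Finset.range (N + 1)) 0,
    if_pos (Finset.mem_range.2 (Nat.succ_pos N))]


theorem statement2 {K : Type*} [Field K] [CharZero K] (f : ℕ → ℕ → K)
    (hf00 : f 0 0 = 0) (hf01 : f 0 1 ≠ 0)
    (gbar : PowerSeries (PowerSeries K))
    (hgbar0 : PowerSeries.constantCoeff gbar = 0)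
    (hgbar1 : psComp (gSer f) gbar = PowerSeries.X)
    (hgbar2 : psComp gbar (gSer f) = PowerSeries.X)
    (y : PowerSeries K) (hy0 : PowerSeries.constantCoeff y = 0)
    (hy : substY (Fser f) y = 0) :
    y = psEval gbar (-(phiSer f 0)) := by
  have hg0 : PowerSeries.coeff 0 (gSer f) = 0 := by
    rw [gSer, coeff_mk]; simp
  have h1 : psEval (gSer f) y = -(phiSer f 0) :=
    eq_neg_of_add_eq_zero_right ((substY_eq f y).symm.trans hy)
  calc y = psEval X y := (psEval_X hy0).symm
    _ = psEval (psComp gbar (gSer f)) y := by rw [hgbar2]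
    _ = psEval gbar (psEval (gSer f) y) := psEval_psComp _ _ hy0 hg0
    _ = psEval gbar (-(phiSer f 0)) := by rw [h1]
end

section
/- Let R be a commutative ℚ-algebra and let h ∈ R[[Y]] be a formal power series with zero constant term whose linear coefficient is a unit of R. Write h_j = j!·(coefficient of Y^j in h), and let h̄ be the compositional inverse of h. Then for every n ≥ 1, the n-th Taylor coefficient of h̄ is given by n!·[Y^n] h̄ = h_1^{-(2n-1)} · Σ (−1)^{n−1−r_1} (2n−2−r_1)! / (r_2! ⋯ r_n! (2!)^{r_2} ⋯ (n!)^{r_n}) · h_1^{r_1} h_2^{r_2} ⋯ h_n^{r_n}, where the sum runs over all tuples (r_1, …, r_n) of nonnegative integers with r_1 + r_2 + ⋯ + r_n = n − 1 and r_1 + 2r_2 + ⋯ + n·r_n = 2n − 2. -/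
open PowerSeries

section aux
variable {R : Type*} [CommRing R]

variable {R : Type*} [CommRing R]

lemma coeff_pow_zero_of_lt_s3 {h : R⟦X⟧} (hh0 : constantCoeff h = 0) {j k : ℕ} (hjk : j < k) :
    coeff j (h ^ k) = 0 := by
  obtain ⟨u, hu⟩ : (X : R⟦X⟧) ∣ h := by rwa [X_dvd_iff]
  subst hu
  rw [mul_pow, coeff_X_pow_mul', if_neg (by omega)]

lemma coeff_mul_pow_zero_of_lt_s3 {h : R⟦X⟧} (hh0 : constantCoeff h = 0) {j k : ℕ}
    (hjk : j < k) (f : R⟦X⟧) : coeff j (f * h ^ k) = 0 := by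
  rw [coeff_mul]
  refine Finset.sum_eq_zero fun p hp => ?_
  rw [Finset.HasAntidiagonal.mem_antidiagonal] at hp
  rw [coeff_pow_zero_of_lt_s3 hh0 (by omega : p.2 < k), mul_zero]

lemma coeff_psComp_eq {g h : R⟦X⟧} (hh0 : constantCoeff h = 0) {j N : ℕ} (hjN : j ≤ N) :
    coeff j (psComp g h) =
      coeff j (∑ m ∈ Finset.range (N + 1), C (coeff m g) * h ^ m) := by
  rw [psComp, coeff_mk, map_sum]
  simp only [coeff_C_mul]
  apply Finset.sum_subset
  · intro x hx
    simp only [Finset.mem_range] at *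
    omega
  · intro m _ hm
    simp only [Finset.mem_range, not_lt] at hm
    rw [coeff_pow_zero_of_lt_s3 hh0 (by omega), mul_zero]

section main
variable [Algebra ℚ R]

lemma nat_cast_unit (p : ℕ) (hp : 0 < p) : IsUnit (p : R) := by
  have : (p : R) = algebraMap ℚ R (p : ℚ) := by rw [map_natCast]
  rw [this]
  exact IsUnit.map _ (isUnit_iff_ne_zero.2 (by exact_mod_cast hp.ne'))

/-- Key vanishing: residue of v^p * dh for p ≥ 2. -/
lemma keyZ {u v : R⟦X⟧} (huv : u * v = 1) {p : ℕ} (hp : 2 ≤ p) :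
    coeff (p - 1) (v ^ p * d⁄dX R (X * u)) = 0 := by
  obtain ⟨q, rfl⟩ : ∃ q, p = q + 2 := ⟨p - 2, by omega⟩
  have hdv : d⁄dX R v = -(v ^ 2 * d⁄dX R u) := by
    have h0 : u * d⁄dX R v + v * d⁄dX R u = 0 := by
      have := Derivation.leibniz (d⁄dX R) u v
      rw [huv] at this
      simpa using this.symm
    have h2 := congrArg (v * ·) h0
    simp only [mul_add, mul_zero] at h2
    have h1 : v * (u * d⁄dX R v) = d⁄dX R v := by
      rw [← mul_assoc, mul_comm v u, huv, one_mul]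
    rw [h1, ← eq_neg_iff_add_eq_zero] at h2
    rw [h2]; ring
  have hdvp : d⁄dX R (v ^ (q + 1)) = -((q + 1 : ℕ) • (v ^ (q+2) * d⁄dX R u)) := by
    rw [Derivation.leibniz_pow, hdv]
    simp only [Nat.add_sub_cancel, smul_eq_mul, smul_neg, nsmul_eq_mul]
    ring
  have hdh : d⁄dX R (X * u) = u + X * d⁄dX R u := by
    rw [Derivation.leibniz]
    simp [mul_comm, add_comm]
  have expand : v ^ (q+2) * d⁄dX R (X * u) = v ^ (q+1) + X * (v ^ (q+2) * d⁄dX R u) := by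
    rw [hdh, mul_add]
    congr 1
    · rw [pow_succ, mul_assoc, mul_comm v u, huv, mul_one]
    · ring
  have hind : (q + 2) - 1 = q + 1 := rfl
  rw [hind, expand, map_add]
  have h1 : coeff (q + 1) (X * (v ^ (q+2) * d⁄dX R u)) =
      coeff q (v ^ (q+2) * d⁄dX R u) := coeff_succ_X_mul _ _
  rw [h1]
  have hco : coeff q (d⁄dX R (v ^ (q+1))) = coeff (q+1) (v ^ (q+1)) * (q + 1 : ℕ) := by
    rw [coeff_derivative]; norm_num
  rw [hdvp] at hco
  simp only [map_neg, coeff_smul, map_nsmul] at hco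
  -- hco : -((q+1) • coeff q (v^(q+2) * du)) = coeff (q+1) (v^(q+1)) * (q+1)
  have hunit : IsUnit ((q + 1 : ℕ) : R) := nat_cast_unit _ (by omega)
  have : ((q+1 : ℕ) : R) * (coeff (q+1) (v ^ (q+1)) + coeff q (v ^ (q+2) * d⁄dX R u)) = 0 := by
    rw [mul_add]
    have := hco
    simp only [nsmul_eq_mul] at this
    rw [mul_comm (((q+1:ℕ)):R) (coeff (q+1) (v ^ (q+1)))]
    linear_combination -this
  exact (hunit.mul_right_eq_zero).mp this


lemma coeff_pow_congr {A B : R⟦X⟧} {J : ℕ} (hAB : ∀ j, j ≤ J → coeff j A = coeff j B)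
    (k : ℕ) : ∀ j, j ≤ J → coeff j (A ^ k) = coeff j (B ^ k) := by
  induction k with
  | zero => intro j _; rfl
  | succ k ih =>
    intro j hj
    rw [pow_succ, pow_succ, coeff_mul, coeff_mul]
    refine Finset.sum_congr rfl fun p hp => ?_
    rw [Finset.HasAntidiagonal.mem_antidiagonal] at hp
    rw [ih p.1 (by omega), hAB p.2 (by omega)]

/-- partial sums of the negative binomial series -/
noncomputable def negBinS (w : R⟦X⟧) (a m : ℕ) : R⟦X⟧ :=
  ∑ k ∈ Finset.range (m + 1), C ((-1 : R) ^ k * (Nat.choose (a + k) k : R)) * w ^ k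

lemma oneAddW_mul_negBinS (w : R⟦X⟧) (a m : ℕ) :
    (1 + w) * negBinS w (a + 1) m =
      negBinS w a m + C ((-1 : R) ^ m * (Nat.choose (a + 1 + m) m : R)) * w ^ (m + 1) := by
  have hpas : ∀ k, C ((-1:R) ^ (k+1) * (Nat.choose (a+1+(k+1)) (k+1) : R)) * w ^ (k+1) +
      C ((-1:R) ^ k * (Nat.choose (a+1+k) k : R)) * w ^ (k+1) =
      C ((-1:R) ^ (k+1) * (Nat.choose (a+(k+1)) (k+1) : R)) * w ^ (k+1) := by
    intro k
    rw [← add_mul, ← map_add]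
    congr 2
    have hch : (a+1+(k+1)).choose (k+1) = (a+1+k).choose k + (a+(k+1)).choose (k+1) := by
      have := Nat.choose_succ_succ' (a + k + 1) k
      rw [show a+1+(k+1) = a+k+1+1 by omega]
      rw [show a+1+k = a+k+1 by omega, show a+(k+1) = a+k+1 by omega]
      omega
    rw [hch]
    push_cast
    ring
  rw [add_mul, one_mul, negBinS, Finset.mul_sum]
  have hws : ∀ k, w * (C ((-1:R) ^ k * (Nat.choose (a+1+k) k : R)) * w ^ k) =
      C ((-1:R) ^ k * (Nat.choose (a+1+k) k : R)) * w ^ (k+1) := fun k => by ring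
  rw [Finset.sum_congr rfl fun k _ => hws k]
  rw [Finset.sum_range_succ (fun k => C ((-1:R) ^ k * (Nat.choose (a+1+k) k : R)) * w ^ (k+1)) m]
  rw [negBinS, Finset.sum_range_succ' (fun k => C ((-1:R) ^ k * (Nat.choose (a+k) k : R)) * w ^ k) m,
    Finset.sum_range_succ' (fun k => C ((-1:R) ^ k * (Nat.choose (a+1+k) k : R)) * w ^ k) m]
  have hkey : (∑ k ∈ Finset.range m, C ((-1:R)^(k+1) * ((a+1+(k+1)).choose (k+1) : R)) * w^(k+1)) +
      (∑ k ∈ Finset.range m, C ((-1:R)^k * ((a+1+k).choose k : R)) * w^(k+1)) =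
      ∑ k ∈ Finset.range m, C ((-1:R)^(k+1) * ((a+(k+1)).choose (k+1) : R)) * w^(k+1) := by
    rw [← Finset.sum_add_distrib]
    exact Finset.sum_congr rfl fun k _ => hpas k
  simp only [Nat.choose_zero_right, Nat.choose_self, pow_zero, one_mul, Nat.cast_one, mul_one,
    Nat.add_zero]
  linear_combination hkey

/-- coefficients of `(1+w)^(a+1) * negBinS w a m - 1` vanish up to degree m -/
lemma coeff_pow_mul_negBinS {w : R⟦X⟧} (hw0 : constantCoeff w = 0) (a m : ℕ) :
    ∀ j, j ≤ m → coeff j ((1 + w) ^ (a+1) * negBinS w a m) = coeff j (1 : R⟦X⟧) := by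
  induction a with
  | zero =>
    -- (1+w) * negBinS w 0 m = 1 + (-1)^m w^(m+1) : telescoping
    have htel : (1 + w) * negBinS w 0 m = 1 + C ((-1:R)^m) * w ^ (m+1) := by
      induction m with
      | zero => simp [negBinS]
      | succ m ihm =>
        rw [negBinS, Finset.sum_range_succ, mul_add, ← negBinS, ihm]
        simp only [Nat.zero_add, Nat.choose_self, Nat.cast_one, mul_one]
        have : (1 + w) * (C ((-1:R)^(m+1)) * w^(m+1)) =
            C ((-1:R)^(m+1)) * w^(m+1) + C ((-1:R)^(m+1)) * w^(m+2) := by ring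
        rw [this]
        have hsign : C ((-1:R)^m) * w ^ (m+1) + C ((-1:R)^(m+1)) * w^(m+1) = 0 := by
          rw [← add_mul, ← map_add, pow_succ]
          ring_nf
          simp
        calc 1 + C ((-1:R)^m) * w ^ (m+1) +
              (C ((-1:R)^(m+1)) * w^(m+1) + C ((-1:R)^(m+1)) * w^(m+2)) =
            1 + (C ((-1:R)^m) * w ^ (m+1) + C ((-1:R)^(m+1)) * w^(m+1)) +
              C ((-1:R)^(m+1)) * w^(m+2) := by ring
          _ = 1 + C ((-1:R)^(m+1)) * w^(m+2) := by rw [hsign]; ring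
    intro j hj
    rw [pow_one, htel, map_add]
    have : coeff j (C ((-1:R)^m) * w ^ (m+1)) = 0 := by
      rw [coeff_C_mul, coeff_pow_zero_of_lt_s3 hw0 (by omega), mul_zero]
    rw [this, add_zero]
  | succ a ih =>
    intro j hj
    have : (1 + w) ^ (a+1+1) * negBinS w (a+1) m =
        (1 + w) ^ (a+1) * negBinS w a m +
          C ((-1:R)^m * ((a+1+m).choose m : R)) * ((1+w)^(a+1) * w ^ (m+1)) := by
      calc (1 + w) ^ (a+1+1) * negBinS w (a+1) m
          = (1+w)^(a+1) * ((1 + w) * negBinS w (a+1) m) := by ring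
        _ = (1+w)^(a+1) * (negBinS w a m + C ((-1:R)^m * ((a+1+m).choose m : R)) * w^(m+1)) := by
            rw [oneAddW_mul_negBinS]
        _ = _ := by ring
    rw [this, map_add, ih j hj]
    have hz : coeff j (C ((-1:R)^m * ((a+1+m).choose m : R)) * ((1+w)^(a+1) * w ^ (m+1))) = 0 := by
      rw [coeff_C_mul, coeff_mul_pow_zero_of_lt_s3 hw0 (by omega), mul_zero]
    rw [hz, add_zero]

/-- GEO: coefficient of a power of the inverse of 1 + w. -/
lemma coeff_inv_pow {w vw : R⟦X⟧} (hw0 : constantCoeff w = 0)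
    (hvw : (1 + w) * vw = 1) (a m : ℕ) :
    coeff m (vw ^ (a+1)) =
      ∑ k ∈ Finset.range (m+1), (-1:R)^k * ((a+k).choose k : R) * coeff m (w ^ k) := by
  have hS : negBinS w a m = vw ^ (a+1) + vw ^ (a+1) * ((1+w)^(a+1) * negBinS w a m - 1) := by
    have h1 : vw ^ (a+1) * (1+w)^(a+1) = 1 := by
      rw [← mul_pow, mul_comm vw (1+w), hvw, one_pow]
    calc negBinS w a m = (vw ^ (a+1) * (1+w)^(a+1)) * negBinS w a m := by rw [h1, one_mul]
      _ = _ := by ring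
  have h2 : coeff m (vw ^ (a+1) * ((1+w)^(a+1) * negBinS w a m - 1)) = 0 := by
    rw [coeff_mul]
    refine Finset.sum_eq_zero fun p hp => ?_
    rw [Finset.HasAntidiagonal.mem_antidiagonal] at hp
    have : coeff p.2 ((1+w)^(a+1) * negBinS w a m - 1) = 0 := by
      rw [map_sub, coeff_pow_mul_negBinS hw0 a m p.2 (by omega), sub_self]
    rw [this, mul_zero]
  have h3 := congrArg (coeff m) hS
  rw [map_add, h2, add_zero] at h3
  rw [← h3, negBinS, map_sum]
  exact Finset.sum_congr rfl fun k _ => by rw [coeff_C_mul, mul_assoc]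

/-- coefficient of w^k as a multinomial sum -/
lemma coeff_pow_eq_multinomial_sum {w : R⟦X⟧} (hw0 : constantCoeff w = 0) (N k : ℕ) :
    coeff N (w ^ k) = ∑ g ∈ Finset.piAntidiag (Finset.Icc 1 N) k,
      if (∑ j ∈ Finset.Icc 1 N, j * g j) = N
      then (Nat.multinomial (Finset.Icc 1 N) g : R) * ∏ j ∈ Finset.Icc 1 N, (coeff j w) ^ g j
      else 0 := by
  classical
  set T : R⟦X⟧ := ∑ j ∈ Finset.Icc 1 N, C (coeff j w) * X ^ j with hT
  have hTco : ∀ j, j ≤ N → coeff j T = coeff j w := by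
    intro j hj
    rw [hT, map_sum]
    have hterm : ∀ i ∈ Finset.Icc 1 N, coeff j (C (coeff i w) * X ^ i) =
        if i = j then coeff i w else 0 := by
      intro i _
      rw [coeff_C_mul, coeff_X_pow]
      by_cases hij : j = i
      · subst hij; rw [if_pos rfl, if_pos rfl, mul_one]
      · rw [if_neg hij, if_neg (Ne.symm hij), mul_zero]
    rw [Finset.sum_congr rfl hterm, Finset.sum_ite_eq' (Finset.Icc 1 N) j]
    by_cases hjmem : j ∈ Finset.Icc 1 N
    · rw [if_pos hjmem]
    · rw [if_neg hjmem]
      have : j = 0 := by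
        simp only [Finset.mem_Icc] at hjmem
        omega
      rw [this, coeff_zero_eq_constantCoeff, hw0]
  rw [← coeff_pow_congr hTco k N le_rfl, hT, Finset.sum_pow_eq_sum_piAntidiag, map_sum]
  refine Finset.sum_congr rfl fun g hg => ?_
  have hprod : ∏ j ∈ Finset.Icc 1 N, (C (coeff j w) * X ^ j) ^ g j =
      C (∏ j ∈ Finset.Icc 1 N, (coeff j w) ^ g j) *
        X ^ (∑ j ∈ Finset.Icc 1 N, j * g j) := by
    rw [map_prod]
    rw [← Finset.prod_pow_eq_pow_sum, ← Finset.prod_mul_distrib]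
    refine Finset.prod_congr rfl fun j _ => ?_
    rw [mul_pow, map_pow, ← pow_mul]
  rw [hprod]
  have : ((Nat.multinomial (Finset.Icc 1 N) g : R⟦X⟧)) = C ((Nat.multinomial (Finset.Icc 1 N) g : R)) := by
    rw [map_natCast]
  rw [this, ← mul_assoc, ← map_mul, coeff_C_mul, coeff_X_pow]
  by_cases hs : (∑ j ∈ Finset.Icc 1 N, j * g j) = N
  · rw [if_pos hs, if_pos hs.symm, mul_one]
  · rw [if_neg hs, if_neg (Ne.symm hs), mul_zero]

theorem partA {h hbar u v : R⟦X⟧} (hh0 : constantCoeff h = 0)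
    (hXu : h = X * u) (huv : u * v = 1)
    (hv0 : constantCoeff v * coeff 1 h = 1)
    (hinv2 : psComp hbar h = PowerSeries.X)
    (n : ℕ) (hn : 1 ≤ n) :
    (n : R) * coeff n hbar = coeff (n - 1) (v ^ n) := by
  classical
  set b : ℕ → R := fun m => coeff m hbar with hb
  set P : R⟦X⟧ := ∑ m ∈ Finset.range (n + 1), C (b m) * h ^ m with hP
  have hPco : ∀ j, j ≤ n → coeff j P = coeff j (X : R⟦X⟧) := by
    intro j hj
    rw [← hinv2, coeff_psComp_eq hh0 hj]
  obtain ⟨G, hG⟩ : ∃ G, P = X + X ^ (n+1) * G := by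
    refine ⟨PowerSeries.mk fun j => coeff (n + 1 + j) (P - X), ?_⟩
    ext j
    rw [map_add, coeff_X_pow_mul']
    split_ifs with hc
    · rw [coeff_mk]
      have : n + 1 + (j - (n+1)) = j := by omega
      rw [this, map_sub]
      ring
    · rw [hPco j (by omega)]; ring
  have hcancel : ∀ a c : ℕ, u ^ a * v ^ (a + c) = v ^ c := fun a c => by
    rw [pow_add, ← mul_assoc, ← mul_pow, huv, one_pow, one_mul]
  -- coefficient of the derivative identity times v^n
  have main := congrArg (fun f => coeff (n-1) (d⁄dX R f * v ^ n)) hG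
  beta_reduce at main
  -- RHS of main
  have hrhs : coeff (n-1) (d⁄dX R (X + X ^ (n+1) * G) * v ^ n) = coeff (n-1) (v ^ n) := by
    rw [map_add, derivative_X, add_mul, one_mul, map_add]
    have hz : coeff (n-1) (d⁄dX R (X ^ (n+1) * G) * v ^ n) = 0 := by
      rw [coeff_mul]
      refine Finset.sum_eq_zero fun p hp => ?_
      rw [Finset.HasAntidiagonal.mem_antidiagonal] at hp
      have : coeff p.1 (d⁄dX R (X ^ (n+1) * G)) = 0 := by
        rw [coeff_derivative, coeff_X_pow_mul', if_neg (by omega), zero_mul]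
      rw [this, zero_mul]
    rw [hz, add_zero]
  rw [hrhs] at main
  -- LHS of main
  have hlhs : coeff (n-1) (d⁄dX R P * v ^ n) = (n : R) * b n := by
    rw [hP, map_sum (d⁄dX R), Finset.sum_mul, map_sum]
    have hterm : ∀ m ∈ Finset.range (n+1),
        coeff (n-1) (d⁄dX R (C (b m) * h ^ m) * v ^ n) =
          if m = n then (n : R) * b n else 0 := by
      intro m hm
      rw [Finset.mem_range] at hm
      rcases Nat.eq_zero_or_pos m with h0 | hpos
      · subst h0
        rw [if_neg (by omega)]
        simp
      obtain ⟨l, rfl⟩ : ∃ l, m = l + 1 := ⟨m - 1, by omega⟩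
      have hd : d⁄dX R (C (b (l+1)) * h ^ (l+1)) =
          C ((l+1 : ℕ) * b (l+1)) * (h ^ l * d⁄dX R h) := by
        rw [Derivation.leibniz, derivative_C, smul_zero, add_zero, Derivation.leibniz_pow]
        simp only [smul_eq_mul, Nat.add_sub_cancel, map_mul, map_natCast]
        push_cast
        ring
      rw [hd]
      have hh2 : h ^ l * v ^ n = X ^ l * v ^ (n - l) := by
        have hnl : u ^ l * v ^ n = v ^ (n - l) := by
          have he : n = l + (n - l) := by omega
          rw [he, hcancel, ← he]
        rw [hXu, mul_pow, mul_assoc, hnl]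
      have hrw : C ((l+1 : ℕ) * b (l+1)) * (h ^ l * d⁄dX R h) * v ^ n =
          C ((l+1 : ℕ) * b (l+1)) * (X ^ l * (v ^ (n - l) * d⁄dX R (X * u))) := by
        rw [← hXu]
        calc C ((l+1 : ℕ) * b (l+1)) * (h ^ l * d⁄dX R h) * v ^ n
            = C ((l+1 : ℕ) * b (l+1)) * ((h ^ l * v ^ n) * d⁄dX R h) := by ring
          _ = C ((l+1 : ℕ) * b (l+1)) * ((X ^ l * v ^ (n-l)) * d⁄dX R h) := by rw [hh2]
          _ = C ((l+1 : ℕ) * b (l+1)) * (X ^ l * (v ^ (n-l) * d⁄dX R h)) := by ring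
      rw [hrw, coeff_C_mul, coeff_X_pow_mul', if_pos (by omega : l ≤ n - 1)]
      rcases Nat.lt_or_ge (l+1) n with hlt | hge
      · rw [if_neg (by omega)]
        have hz := keyZ (R := R) huv (p := n - l) (by omega)
        have : n - 1 - l = n - l - 1 := by omega
        rw [this, hz, mul_zero]
      · have hln : l + 1 = n := by omega
        rw [if_pos hln]
        have h1 : n - 1 - l = 0 := by omega
        have h2 : n - l = 1 := by omega
        rw [h1, h2, pow_one]
        have : coeff 0 (v * d⁄dX R (X * u)) =
            constantCoeff v * coeff 1 h := by
          rw [coeff_zero_eq_constantCoeff, map_mul, ← hXu]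
          congr 1
          have := coeff_derivative h 0
          rw [coeff_zero_eq_constantCoeff] at this
          rw [this]
          push_cast
          ring
        rw [this, hv0, mul_one, hln]
    rw [Finset.sum_congr rfl hterm, Finset.sum_ite_eq' (Finset.range (n+1)) n
      (fun _ => (n:R) * b n), if_pos (Finset.self_mem_range_succ n)]
  rw [hlhs] at main
  exact main


end main
end aux

/-- splitting a Fin (N+1) sum into 0-term and Icc 1 N sum -/
lemma sum_fin_split {M : Type*} [AddCommMonoid M] (N : ℕ) (f : ℕ → M) :
    ∑ i : Fin (N+1), f i.1 = f 0 + ∑ j ∈ Finset.Icc 1 N, f j := by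
  rw [Fin.sum_univ_eq_sum_range, Finset.sum_range_succ']
  rw [← Finset.Ico_add_one_right_eq_Icc, Finset.sum_Ico_eq_sum_range]
  simp only [Nat.succ_sub_one, Nat.add_sub_cancel, add_comm]

lemma prod_fin_split {M : Type*} [CommMonoid M] (N : ℕ) (f : ℕ → M) :
    ∏ i : Fin (N+1), f i.1 = f 0 * ∏ j ∈ Finset.Icc 1 N, f j := by
  rw [Fin.prod_univ_eq_prod_range, Finset.prod_range_succ']
  rw [← Finset.Ico_add_one_right_eq_Icc, Finset.prod_Ico_eq_prod_range]
  simp only [Nat.succ_sub_one, Nat.add_sub_cancel, add_comm, mul_comm]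

theorem statement3 {R : Type*} [CommRing R] [Algebra ℚ R] (h hbar : PowerSeries R)
    (hh0 : PowerSeries.constantCoeff h = 0)
    (hu : IsUnit (PowerSeries.coeff 1 h))
    (hb0 : PowerSeries.constantCoeff hbar = 0)
    (hinv1 : psComp h hbar = PowerSeries.X) (hinv2 : psComp hbar h = PowerSeries.X)
    (n : ℕ) (hn : 1 ≤ n) :
    (n.factorial : R) * PowerSeries.coeff n hbar =
      (↑hu.unit⁻¹ : R) ^ (2 * n - 1) *
        ∑ r ∈ Finset.filter
            (fun r : Fin n → ℕ => (∑ i, r i) = n - 1 ∧ (∑ i, (i.1 + 1) * r i) = 2 * n - 2)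
            (Fintype.piFinset fun _ : Fin n => Finset.range (2 * n)),
          algebraMap ℚ R ((-1 : ℚ) ^ (n - 1 - firstEntry r) *
              ((2 * n - 2 - firstEntry r).factorial : ℚ) /
              ∏ i : Fin n, if i.1 = 0 then 1 else
                ((r i).factorial * ((i.1 + 1).factorial : ℚ) ^ (r i))) *
            ∏ i : Fin n,
              (((i.1 + 1).factorial : R) * PowerSeries.coeff (i.1 + 1) h) ^ (r i) := by
  classical
  obtain ⟨N, rfl⟩ : ∃ N, n = N + 1 := ⟨n - 1, by omega⟩
  set h1 : R := coeff 1 h with hh1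
  set e : R := (↑hu.unit⁻¹ : R) with he
  have hh1e : h1 * e = 1 := hu.mul_val_inv
  have heh1 : e * h1 = 1 := by rw [mul_comm]; exact hh1e
  set u : R⟦X⟧ := PowerSeries.mk fun m => coeff (m+1) h with hudef
  have hXu : h = X * u := by
    ext j
    cases j with
    | zero =>
      rw [coeff_zero_eq_constantCoeff, hh0, map_mul, constantCoeff_X, zero_mul]
    | succ j => rw [coeff_succ_X_mul, hudef, coeff_mk]
  have hu0 : constantCoeff u = ↑hu.unit := by
    rw [hudef, constantCoeff_mk, hu.unit_spec, hh1]
  set v : R⟦X⟧ := invOfUnit u hu.unit with hvdef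
  have huv : u * v = 1 := mul_invOfUnit u hu.unit hu0
  have hv0 : constantCoeff v = e := by rw [hvdef, constantCoeff_invOfUnit, he]
  have hA := partA hh0 hXu huv (by rw [hv0, ← hh1]; exact heh1) hinv2 (N+1) (by omega)
  set w : R⟦X⟧ := C e * u - 1 with hwdef
  have h1pw : (1 : R⟦X⟧) + w = C e * u := by rw [hwdef]; ring
  have hw0 : constantCoeff w = 0 := by
    rw [hwdef, map_sub, map_mul, constantCoeff_C, map_one, hu0, hu.unit_spec, heh1, sub_self]
  set vw : R⟦X⟧ := C h1 * v with hvwdef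
  have hvw : (1 + w) * vw = 1 := by
    rw [h1pw, hvwdef]
    calc C e * u * (C h1 * v) = (C e * C h1) * (u * v) := by ring
      _ = 1 := by rw [← map_mul, heh1, map_one, huv, mul_one]
  have hvvw : v = C e * vw := by
    rw [hvwdef, ← mul_assoc, ← map_mul, heh1, map_one, one_mul]
  have hcoeffw : ∀ j, 1 ≤ j → coeff j w = e * coeff (j+1) h := by
    intro j hj
    rw [hwdef, map_sub, coeff_C_mul, hudef, coeff_mk, coeff_one, if_neg (by omega)]
    ring
  have hsplitv : coeff N (v ^ (N+1)) = e^(N+1) * coeff N (vw ^ (N+1)) := by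
    rw [hvvw, mul_pow, ← map_pow, coeff_C_mul]
  -- the canonical middle sum
  set S := (Finset.range (N+1)).sigma (fun k => (Finset.piAntidiag (Finset.Icc 1 N) k).filter
      (fun g => (∑ j ∈ Finset.Icc 1 N, j * g j) = N)) with hSdef
  set F : ℕ → (ℕ → ℕ) → R := fun k g => ((N.factorial : R) * e^(N+1)) *
      ((-1:R)^k * ((N+k).choose k : R) *
        ((Nat.multinomial (Finset.Icc 1 N) g : R) *
          ∏ j ∈ Finset.Icc 1 N, (e * coeff (j+1) h) ^ g j)) with hFdef
  have hL : ((N+1).factorial : R) * coeff (N+1) hbar = ∑ p ∈ S, F p.1 p.2 := by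
    have hfact : ((N+1).factorial : R) = (N.factorial : R) * ((N+1 : ℕ) : R) := by
      rw [Nat.factorial_succ]
      push_cast
      ring
    have e1 : (N + 1) - 1 = N := by omega
    rw [e1] at hA
    rw [hfact, mul_assoc, hA]
    rw [hsplitv, ← mul_assoc, coeff_inv_pow hw0 hvw N N, Finset.mul_sum]
    rw [Finset.sum_sigma]
    refine Finset.sum_congr rfl fun k hk => ?_
    rw [coeff_pow_eq_multinomial_sum hw0 N k]
    trans (∑ g ∈ (Finset.Icc 1 N).piAntidiag k,
        if (∑ j ∈ Finset.Icc 1 N, j * g j) = N then F k g else 0)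
    · rw [Finset.mul_sum, Finset.mul_sum]
      refine Finset.sum_congr rfl fun g hg => ?_
      by_cases hc : (∑ j ∈ Finset.Icc 1 N, j * g j) = N
      · rw [if_pos hc, if_pos hc]
        have hprodrw : ∏ j ∈ Finset.Icc 1 N, (coeff j w) ^ g j =
            ∏ j ∈ Finset.Icc 1 N, (e * coeff (j+1) h) ^ g j := by
          refine Finset.prod_congr rfl fun j hj => ?_
          rw [hcoeffw j (Finset.mem_Icc.mp hj).1]
        rw [hprodrw, hFdef]
      · rw [if_neg hc, if_neg hc, mul_zero, mul_zero]
    · rw [← Finset.sum_filter]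
  rw [hL]
  have e2 : 2 * (N + 1) - 1 = 2*N+1 := by omega
  have e3 : N + 1 - 1 = N := by omega
  have e4 : 2*(N+1) - 2 = 2*N := by omega
  have e5 : 2*(N+1) = 2*N+2 := by omega
  simp only [e2, e3, e4, e5, Finset.mul_sum]
  have hmemS : ∀ (k : ℕ) (g : ℕ → ℕ), (⟨k, g⟩ : Σ _ : ℕ, ℕ → ℕ) ∈ S ↔
      (k ≤ N ∧ ((∑ j ∈ Finset.Icc 1 N, g j) = k ∧ ∀ j, g j ≠ 0 → j ∈ Finset.Icc 1 N) ∧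
        (∑ j ∈ Finset.Icc 1 N, j * g j) = N) := by
    intro k g
    rw [hSdef, Finset.mem_sigma, Finset.mem_filter, Finset.mem_piAntidiag, Finset.mem_range]
    constructor
    · rintro ⟨hr, ⟨hpa1, hpa2⟩, hc⟩
      exact ⟨Nat.lt_succ_iff.mp hr, ⟨hpa1, hpa2⟩, hc⟩
    · rintro ⟨hr, ⟨hpa1, hpa2⟩, hc⟩
      exact ⟨Nat.lt_succ_iff.mpr hr, ⟨hpa1, hpa2⟩, hc⟩
  have hdite_eq : ∀ r : Fin (N+1) → ℕ, ∀ i : Fin (N+1),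
      (if hj : (i : ℕ) < N+1 then r ⟨i.1, hj⟩ else 0) = r i := by
    intro r i
    rw [dif_pos i.isLt]
  have hsum_r : ∀ r : Fin (N+1) → ℕ, (∑ i, r i) =
      r 0 + ∑ j ∈ Finset.Icc 1 N, (if hj : j < N+1 then r ⟨j, hj⟩ else 0) := by
    intro r
    have hfs := sum_fin_split N (fun j => if hj : j < N+1 then r ⟨j, hj⟩ else 0)
    have hcong : (∑ i : Fin (N+1), (if hj : (i : ℕ) < N+1 then r ⟨i.1, hj⟩ else 0)) =
        ∑ i, r i := Finset.sum_congr rfl (fun i _ => hdite_eq r i)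
    rw [hcong] at hfs
    rw [hfs, dif_pos (by omega : (0:ℕ) < N+1), Fin.mk_zero]
  have hwsum_r : ∀ r : Fin (N+1) → ℕ, (∑ i : Fin (N+1), ((i : ℕ) + 1) * r i) =
      r 0 + ∑ j ∈ Finset.Icc 1 N, (j+1) * (if hj : j < N+1 then r ⟨j, hj⟩ else 0) := by
    intro r
    have hfs := sum_fin_split N (fun j => (j+1) * (if hj : j < N+1 then r ⟨j, hj⟩ else 0))
    have hcong : (∑ i : Fin (N+1), ((i : ℕ)+1) * (if hj : (i : ℕ) < N+1 then r ⟨i.1, hj⟩ else 0)) =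
        ∑ i : Fin (N+1), ((i : ℕ)+1) * r i :=
      Finset.sum_congr rfl (fun i _ => by rw [hdite_eq r i])
    rw [hcong] at hfs
    rw [hfs, dif_pos (by omega : (0:ℕ) < N+1), Fin.mk_zero, zero_add, one_mul]
  refine Finset.sum_nbij'
    (fun p => fun i : Fin (N+1) => if (i : ℕ) = 0 then N - p.1 else p.2 i.1)
    (fun r => ⟨N - r 0, fun j => if j = 0 then 0 else if hj : j < N+1 then r ⟨j, hj⟩ else 0⟩)
    ?_ ?_ ?_ ?_ ?_
  · -- forward membership
    rintro ⟨k, g⟩ hp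
    obtain ⟨hk, ⟨hgsum, hgsupp⟩, hgcond⟩ := (hmemS k g).mp hp
    have hgle : ∀ j ∈ Finset.Icc 1 N, g j ≤ k := by
      intro j hj
      rw [← hgsum]
      exact Finset.single_le_sum (fun _ _ => Nat.zero_le _) hj
    rw [Finset.mem_filter, Fintype.mem_piFinset]
    simp only [Finset.mem_range]
    refine ⟨?_, ?_, ?_⟩
    · intro i
      by_cases hi : (i : ℕ) = 0
      · simp only [hi, if_pos]
        omega
      · rw [if_neg hi]
        by_cases hmem : (i : ℕ) ∈ Finset.Icc 1 N
        · have := hgle _ hmem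
          omega
        · have : g i.1 = 0 := by
            by_contra hne
            exact hmem (hgsupp _ hne)
          omega
    · rw [sum_fin_split N (fun j => if j = 0 then N - k else g j)]
      rw [if_pos rfl]
      rw [Finset.sum_congr rfl (fun j hj => if_neg (by
        have := Finset.mem_Icc.mp hj; omega))]
      rw [hgsum]
      omega
    · rw [sum_fin_split N (fun j => (j + 1) * (if j = 0 then N - k else g j))]
      rw [if_pos rfl]
      rw [Finset.sum_congr rfl (fun j hj => by
        rw [if_neg (by have := Finset.mem_Icc.mp hj; omega)])]
      have hsplit2 : ∑ j ∈ Finset.Icc 1 N, (j + 1) * g j =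
          (∑ j ∈ Finset.Icc 1 N, j * g j) + ∑ j ∈ Finset.Icc 1 N, g j := by
        rw [← Finset.sum_add_distrib]
        exact Finset.sum_congr rfl fun j _ => by ring
      rw [hsplit2, hgsum, hgcond]
      omega
  · -- backward membership
    intro r hr
    rw [Finset.mem_filter, Fintype.mem_piFinset] at hr
    simp only [Finset.mem_range] at hr
    obtain ⟨hbd, hsum, hwsum⟩ := hr
    have hr0 : r 0 ≤ N := by
      have := Finset.single_le_sum (f := r) (fun _ _ => Nat.zero_le _)
        (Finset.mem_univ (0 : Fin (N+1)))
      omega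
    have h1s := hsum_r r
    rw [hsum] at h1s
    have h2s := hwsum_r r
    rw [hwsum] at h2s
    rw [hmemS]
    have hIccG : ∀ j ∈ Finset.Icc 1 N,
        (if j = 0 then 0 else if hj : j < N+1 then r ⟨j, hj⟩ else 0) =
          (if hj : j < N+1 then r ⟨j, hj⟩ else 0) := by
      intro j hj
      rw [if_neg (by have := Finset.mem_Icc.mp hj; omega)]
    refine ⟨by omega, ⟨?_, ?_⟩, ?_⟩
    · rw [Finset.sum_congr rfl hIccG]
      omega
    · intro j hj
      rw [Finset.mem_Icc]
      by_contra hc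
      push_neg at hc
      apply hj
      by_cases hj0 : j = 0
      · rw [if_pos hj0]
      · rw [if_neg hj0, dif_neg (by omega)]
    · rw [Finset.sum_congr rfl (fun j hj => by rw [hIccG j hj])]
      have hsplit2 : ∑ j ∈ Finset.Icc 1 N, (j+1) * (if hj : j < N+1 then r ⟨j, hj⟩ else 0) =
          (∑ j ∈ Finset.Icc 1 N, j * (if hj : j < N+1 then r ⟨j, hj⟩ else 0)) +
            ∑ j ∈ Finset.Icc 1 N, (if hj : j < N+1 then r ⟨j, hj⟩ else 0) := by
        rw [← Finset.sum_add_distrib]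
        exact Finset.sum_congr rfl fun j _ => by ring
      omega
  · -- left inverse
    rintro ⟨k, g⟩ hp
    obtain ⟨hk, ⟨hgsum, hgsupp⟩, hgcond⟩ := (hmemS k g).mp hp
    have h1c : (⟨N - (if ((0 : Fin (N+1)) : ℕ) = 0 then N - k else g 0),
        fun j => if j = 0 then 0 else if hj : j < N+1 then
          (if j = 0 then N - k else g j) else 0⟩ : Σ _ : ℕ, ℕ → ℕ).fst = k := by
      show N - (if ((0 : Fin (N+1)) : ℕ) = 0 then N - k else g 0) = k
      rw [if_pos (Fin.val_zero (N+1))]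
      omega
    refine Sigma.ext h1c (heq_of_eq ?_)
    show (fun j => if j = 0 then 0 else if hj : j < N+1 then
        (if j = 0 then N - k else g j) else 0) = g
    funext j
    by_cases hj0 : j = 0
    · subst hj0
      rw [if_pos rfl]
      symm
      by_contra hne
      have := hgsupp 0 hne
      rw [Finset.mem_Icc] at this
      omega
    · rw [if_neg hj0]
      by_cases hjN : j < N + 1
      · rw [dif_pos hjN, if_neg hj0]
      · rw [dif_neg hjN]
        symm
        by_contra hne
        have := hgsupp j hne
        rw [Finset.mem_Icc] at this
        omega
  · -- right inverse
    intro r hr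
    rw [Finset.mem_filter, Fintype.mem_piFinset] at hr
    simp only [Finset.mem_range] at hr
    obtain ⟨hbd, hsum, hwsum⟩ := hr
    have hr0 : r 0 ≤ N := by
      have := Finset.single_le_sum (f := r) (fun _ _ => Nat.zero_le _)
        (Finset.mem_univ (0 : Fin (N+1)))
      omega
    funext i
    show (if (i : ℕ) = 0 then N - (N - r 0)
      else if (i : ℕ) = 0 then 0 else if hj : (i : ℕ) < N+1 then r ⟨i.1, hj⟩ else 0) = r i
    by_cases hi : (i : ℕ) = 0
    · rw [if_pos hi]
      have hieq : i = 0 := Fin.ext hi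
      subst hieq
      omega
    · rw [if_neg hi, if_neg hi, dif_pos i.isLt, Fin.eta]
  · -- value equality
    rintro ⟨k, g⟩ hp
    obtain ⟨hk, ⟨hgsum, hgsupp⟩, hgcond⟩ := (hmemS k g).mp hp
    simp only []
    have hfe : firstEntry (fun i : Fin (N+1) => if (i : ℕ) = 0 then N - k else g i.1) = N - k := by
      rw [firstEntry, dif_pos (Nat.succ_pos N)]
      rw [if_pos rfl]
    rw [hfe]
    have ek1 : N - (N - k) = k := by omega
    have ek2 : 2*N + 2 - 2 - (N - k) = N + k := by omega
    have ek3 : 2*N + 2 - 1 = 2*N + 1 := by omega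
    rw [ek1, ek2, ek3]
    have hp1 : (∏ i : Fin (N+1), if (i : ℕ) = 0 then (1:ℚ) else
        (((if (i : ℕ) = 0 then N - k else g i.1).factorial : ℚ)) *
          ((((i : ℕ)+1).factorial : ℚ)) ^ (if (i : ℕ) = 0 then N - k else g i.1)) =
        ∏ j ∈ Finset.Icc 1 N, ((g j).factorial : ℚ) * (((j+1).factorial : ℚ)) ^ g j := by
      rw [prod_fin_split N (fun j => if j = 0 then (1:ℚ) else
        (((if j = 0 then N - k else g j).factorial : ℚ)) *
          (((j+1).factorial : ℚ)) ^ (if j = 0 then N - k else g j))]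
      rw [if_pos rfl, one_mul]
      refine Finset.prod_congr rfl fun j hj => ?_
      have hj1 := Finset.mem_Icc.mp hj
      rw [if_neg (by omega), if_neg (by omega)]
    have hp2 : (∏ i : Fin (N+1), ((((i : ℕ)+1).factorial : R) * coeff ((i : ℕ)+1) h) ^
          (if (i : ℕ) = 0 then N - k else g i.1)) =
        (coeff 1 h) ^ (N - k) *
          ∏ j ∈ Finset.Icc 1 N, (((j+1).factorial : R) * coeff (j+1) h) ^ g j := by
      rw [prod_fin_split N (fun j => (((j+1).factorial : R) * coeff (j+1) h) ^
        (if j = 0 then N - k else g j))]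
      congr 1
      · rw [if_pos rfl]
        norm_num
      · refine Finset.prod_congr rfl fun j hj => ?_
        have hj1 := Finset.mem_Icc.mp hj
        rw [if_neg (by omega)]
    rw [hp1, hp2]
    -- named pieces
    have hsplit_fac : ∏ j ∈ Finset.Icc 1 N, (((j+1).factorial : R) * coeff (j+1) h) ^ g j =
        (∏ j ∈ Finset.Icc 1 N, (((j+1).factorial : R)) ^ g j) *
          ∏ j ∈ Finset.Icc 1 N, (coeff (j+1) h) ^ g j := by
      rw [← Finset.prod_mul_distrib]
      exact Finset.prod_congr rfl fun j _ => mul_pow _ _ _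
    have hePc : ∏ j ∈ Finset.Icc 1 N, (e * coeff (j+1) h) ^ g j =
        e ^ k * ∏ j ∈ Finset.Icc 1 N, (coeff (j+1) h) ^ g j := by
      rw [show (∏ j ∈ Finset.Icc 1 N, (e * coeff (j+1) h) ^ g j) =
        (∏ j ∈ Finset.Icc 1 N, e ^ g j) * ∏ j ∈ Finset.Icc 1 N, (coeff (j+1) h) ^ g j from by
          rw [← Finset.prod_mul_distrib]
          exact Finset.prod_congr rfl fun j _ => mul_pow _ _ _]
      rw [Finset.prod_pow_eq_pow_sum, hgsum]
    have hek : e ^ (2*N+1) * (coeff 1 h) ^ (N - k) = e ^ (N+1) * e ^ k := by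
      have h2n : 2*N+1 = (N+1+k) + (N-k) := by omega
      rw [h2n, pow_add, mul_assoc, ← mul_pow]
      have : e * coeff 1 h = 1 := by rw [← hh1]; exact heh1
      rw [this, one_pow, mul_one, ← pow_add]
    -- scalar identity
    have hNat2 : (N.factorial * ((N+k).choose k) * (Nat.multinomial (Finset.Icc 1 N) g)) *
        (∏ j ∈ Finset.Icc 1 N, (g j).factorial) = (N+k).factorial := by
      have h1' := Nat.multinomial_spec (Finset.Icc 1 N) g
      rw [hgsum] at h1'
      have h2' := Nat.choose_mul_factorial_mul_factorial (Nat.le_add_left k N)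
      have h3' : N + k - k = N := by omega
      rw [h3'] at h2'
      calc (N.factorial * ((N+k).choose k) * (Nat.multinomial (Finset.Icc 1 N) g)) *
            (∏ j ∈ Finset.Icc 1 N, (g j).factorial)
          = ((N+k).choose k) * ((∏ j ∈ Finset.Icc 1 N, (g j).factorial) *
              Nat.multinomial (Finset.Icc 1 N) g) * N.factorial := by ring
        _ = ((N+k).choose k) * k.factorial * N.factorial := by rw [h1']
        _ = (N+k).factorial := h2'
    have hPg0 : (∏ j ∈ Finset.Icc 1 N, ((g j).factorial : ℚ)) ≠ 0 :=
      Finset.prod_ne_zero_iff.mpr fun j _ => Nat.cast_ne_zero.mpr (Nat.factorial_ne_zero _)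
    have hPf0 : (∏ j ∈ Finset.Icc 1 N, (((j+1).factorial : ℚ)) ^ g j) ≠ 0 :=
      Finset.prod_ne_zero_iff.mpr fun j _ =>
        pow_ne_zero _ (Nat.cast_ne_zero.mpr (Nat.factorial_ne_zero _))
    have hqid : (-1:ℚ)^k * (((N+k).factorial : ℚ)) /
          (∏ j ∈ Finset.Icc 1 N, ((g j).factorial : ℚ) * (((j+1).factorial : ℚ)) ^ g j) *
          (∏ j ∈ Finset.Icc 1 N, (((j+1).factorial : ℚ)) ^ g j) =
        (N.factorial : ℚ) * ((-1:ℚ)^k * (((N+k).choose k : ℕ) : ℚ) *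
          ((Nat.multinomial (Finset.Icc 1 N) g : ℕ) : ℚ)) := by
      rw [Finset.prod_mul_distrib]
      field_simp
      push_cast [← hNat2]
      ring
    have hscalar : algebraMap ℚ R ((-1:ℚ)^k * (((N+k).factorial : ℚ)) /
          (∏ j ∈ Finset.Icc 1 N, ((g j).factorial : ℚ) * (((j+1).factorial : ℚ)) ^ g j)) *
          (∏ j ∈ Finset.Icc 1 N, (((j+1).factorial : R)) ^ g j) =
        (N.factorial : R) * ((-1:R)^k * (((N+k).choose k : ℕ) : R) *
          ((Nat.multinomial (Finset.Icc 1 N) g : ℕ) : R)) := by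
      have hPf : (∏ j ∈ Finset.Icc 1 N, (((j+1).factorial : R)) ^ g j) =
          algebraMap ℚ R (∏ j ∈ Finset.Icc 1 N, (((j+1).factorial : ℚ)) ^ g j) := by
        rw [map_prod]
        exact Finset.prod_congr rfl fun j _ => by rw [map_pow, map_natCast]
      rw [hPf, ← map_mul, hqid, map_mul, map_mul, map_mul, map_natCast, map_natCast,
        map_natCast, map_pow, map_neg, map_one]
    -- final assembly
    rw [hFdef]
    simp only []
    rw [hePc, hsplit_fac]
    calc (N.factorial : R) * e ^ (N + 1) *
          ((-1:R) ^ k * (((N + k).choose k : ℕ) : R) *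
            (((Nat.multinomial (Finset.Icc 1 N) g : ℕ) : R) *
              (e ^ k * ∏ j ∈ Finset.Icc 1 N, (coeff (j+1) h) ^ g j)))
        = ((N.factorial : R) * ((-1:R)^k * (((N+k).choose k : ℕ) : R) *
            ((Nat.multinomial (Finset.Icc 1 N) g : ℕ) : R))) * (e ^ (N+1) * e ^ k) *
            ∏ j ∈ Finset.Icc 1 N, (coeff (j+1) h) ^ g j := by ring
      _ = (algebraMap ℚ R ((-1:ℚ)^k * (((N+k).factorial : ℚ)) /
            (∏ j ∈ Finset.Icc 1 N, ((g j).factorial : ℚ) * (((j+1).factorial : ℚ)) ^ g j)) *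
            (∏ j ∈ Finset.Icc 1 N, (((j+1).factorial : R)) ^ g j)) *
            (e ^ (2*N+1) * (coeff 1 h) ^ (N - k)) *
            ∏ j ∈ Finset.Icc 1 N, (coeff (j+1) h) ^ g j := by rw [hscalar, hek]
      _ = e ^ (2*N+1) * (algebraMap ℚ R ((-1:ℚ)^k * (((N+k).factorial : ℚ)) /
            (∏ j ∈ Finset.Icc 1 N, ((g j).factorial : ℚ) * (((j+1).factorial : ℚ)) ^ g j)) *
            ((coeff 1 h) ^ (N - k) *
              ((∏ j ∈ Finset.Icc 1 N, (((j+1).factorial : R)) ^ g j) *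
                ∏ j ∈ Finset.Icc 1 N, (coeff (j+1) h) ^ g j))) := by ring
end

section
/- Let R be a commutative ℚ-algebra and let φ ∈ R[[x]] be a formal power series with zero constant term. Write φ_j = j!·(coefficient of x^j in φ). Then for all integers n ≥ k ≥ 0, n!·[x^n](φ^k/k!) = B_{n,k}(φ_1, φ_2, …, φ_{n−k+1}), where B_{n,k}(x_1, …, x_{n−k+1}) = Σ n!/(r_1! ⋯ r_n! (1!)^{r_1} ⋯ (n!)^{r_n}) · x_1^{r_1} ⋯ x_n^{r_n}, the sum running over all tuples (r_1, …, r_n) of nonnegative integers with r_1 + ⋯ + r_n = k and r_1 + 2r_2 + ⋯ + n·r_n = n. -/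
open PowerSeries


lemma Icc_one_eq_image (n : ℕ) : Finset.Icc 1 n = (Finset.range n).image (· + 1) := by
  ext j
  simp only [Finset.mem_Icc, Finset.mem_image, Finset.mem_range]
  constructor
  · intro h; exact ⟨j - 1, by omega, by omega⟩
  · rintro ⟨i, hi, rfl⟩; omega

lemma prod_Icc_one {M : Type*} [CommMonoid M] (n : ℕ) (f : ℕ → M) :
    ∏ j ∈ Finset.Icc 1 n, f j = ∏ i : Fin n, f (i.1 + 1) := by
  rw [Icc_one_eq_image, Finset.prod_image (by intro a _ b _ h; have h' : a + 1 = b + 1 := h; omega),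
    ← Fin.prod_univ_eq_prod_range (fun i => f (i + 1)) n]

lemma sum_Icc_one {M : Type*} [AddCommMonoid M] (n : ℕ) (f : ℕ → M) :
    ∑ j ∈ Finset.Icc 1 n, f j = ∑ i : Fin n, f (i.1 + 1) := by
  rw [Icc_one_eq_image, Finset.sum_image (by intro a _ b _ h; have h' : a + 1 = b + 1 := h; omega),
    ← Fin.sum_univ_eq_sum_range (fun i => f (i + 1)) n]



def invMap {n : ℕ} (r' : Fin n → ℕ) (j : ℕ) : ℕ :=
  if h : 1 ≤ j ∧ j ≤ n then r' ⟨j - 1, by omega⟩ else 0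

lemma invMap_succ {n : ℕ} (r' : Fin n → ℕ) (i : Fin n) : invMap r' (i.1 + 1) = r' i := by
  have hi := i.isLt
  rw [invMap, dif_pos ⟨by omega, by omega⟩]
  congr

lemma invMap_of_not {n : ℕ} (r' : Fin n → ℕ) (j : ℕ) (h : ¬(1 ≤ j ∧ j ≤ n)) :
    invMap r' j = 0 := by
  rw [invMap, dif_neg h]

lemma step2 {R : Type*} [CommRing R] [Algebra ℚ R] (n k : ℕ) (a : ℕ → R) :
    ∑ r ∈ Finset.filter (fun r => ∑ i ∈ Finset.Icc 1 n, i * r i = n)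
        (Finset.piAntidiag (Finset.Icc 1 n) k),
      algebraMap ℚ R ((n.factorial : ℚ) * (Nat.multinomial (Finset.Icc 1 n) r : ℚ)
          / (k.factorial : ℚ)) *
        ∏ i ∈ Finset.Icc 1 n, a i ^ r i
      = bellPoly n k (fun j => (j.factorial : R) * a j) := by
  classical
  rw [bellPoly]
  refine Finset.sum_nbij' (fun r => fun i : Fin n => r (i.1 + 1)) invMap ?_ ?_ ?_ ?_ ?_
  · intro r hr
    simp only [Finset.mem_filter, Finset.mem_piAntidiag] at hr
    obtain ⟨⟨hsum, hsupp⟩, hwt⟩ := hr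
    refine Finset.mem_filter.mpr ⟨Fintype.mem_piFinset.mpr fun i => Finset.mem_range.mpr ?_,
      ?_, ?_⟩
    · show r (i.1 + 1) < n + 1
      have hi := i.isLt
      have hmem : i.1 + 1 ∈ Finset.Icc 1 n := Finset.mem_Icc.mpr ⟨by omega, by omega⟩
      have h0 := Finset.single_le_sum (f := fun j => j * r j) (fun j _ => Nat.zero_le _) hmem
      have h1 : (i.1 + 1) * r (i.1 + 1) ≤ ∑ j ∈ Finset.Icc 1 n, j * r j := h0
      rw [hwt] at h1
      have h2 : r (i.1 + 1) ≤ (i.1 + 1) * r (i.1 + 1) :=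
        Nat.le_mul_of_pos_left _ (Nat.succ_pos i.1)
      omega
    · rw [← sum_Icc_one n r]; exact hsum
    · rw [← sum_Icc_one n (fun j => j * r j)]; exact hwt
  · intro r' hr'
    simp only [Finset.mem_filter, Fintype.mem_piFinset, Finset.mem_range] at hr'
    obtain ⟨_, hsum', hwt'⟩ := hr'
    refine Finset.mem_filter.mpr ⟨Finset.mem_piAntidiag.mpr ⟨?_, ?_⟩, ?_⟩
    · rw [sum_Icc_one n (invMap r')]
      simp only [invMap_succ]
      exact hsum'
    · intro j hj
      by_contra hmem
      rw [Finset.mem_Icc] at hmem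
      exact hj (invMap_of_not r' j (by omega))
    · rw [sum_Icc_one n (fun j => j * invMap r' j)]
      simp only [invMap_succ]
      exact hwt'
  · intro r hr
    simp only [Finset.mem_filter, Finset.mem_piAntidiag] at hr
    obtain ⟨⟨hsum, hsupp⟩, hwt⟩ := hr
    funext j
    by_cases h : 1 ≤ j ∧ j ≤ n
    · rw [invMap, dif_pos h]
      show r (j - 1 + 1) = r j
      congr 1
      omega
    · rw [invMap_of_not _ _ h]
      by_contra hne
      have := hsupp j fun hh => hne hh.symm
      rw [Finset.mem_Icc] at this
      omega
  · intro r' hr'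
    funext i
    exact invMap_succ r' i
  · intro r hr
    simp only [Finset.mem_filter, Finset.mem_piAntidiag] at hr
    obtain ⟨⟨hsum, hsupp⟩, hwt⟩ := hr
    show _ = algebraMap ℚ R ((n.factorial : ℚ) /
        ∏ i : Fin n, ((r (i.1 + 1)).factorial * ((i.1 + 1).factorial : ℚ) ^ (r (i.1 + 1)))) *
      ∏ i : Fin n, (((i.1 + 1).factorial : R) * a (i.1 + 1)) ^ (r (i.1 + 1))
    have hx : ∏ i : Fin n, (((i.1 + 1).factorial : R) * a (i.1 + 1)) ^ (r (i.1 + 1))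
        = algebraMap ℚ R (∏ i : Fin n, ((i.1 + 1).factorial : ℚ) ^ (r (i.1 + 1)))
          * ∏ j ∈ Finset.Icc 1 n, a j ^ r j := by
      rw [prod_Icc_one n (fun j => a j ^ r j), map_prod, ← Finset.prod_mul_distrib]
      refine Finset.prod_congr rfl fun i _ => ?_
      rw [map_pow, map_natCast, ← mul_pow]
    rw [hx, ← mul_assoc, ← map_mul]
    set F : ℚ := ∏ i : Fin n, ((r (i.1 + 1)).factorial : ℚ) with hF
    set P : ℚ := ∏ i : Fin n, ((i.1 + 1).factorial : ℚ) ^ (r (i.1 + 1)) with hP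
    have hD : ∏ i : Fin n, (((r (i.1 + 1)).factorial : ℚ)
        * ((i.1 + 1).factorial : ℚ) ^ (r (i.1 + 1))) = F * P := Finset.prod_mul_distrib
    have hk' : F * (Nat.multinomial (Finset.Icc 1 n) r : ℚ) = (k.factorial : ℚ) := by
      have h0 := Nat.multinomial_spec (Finset.Icc 1 n) r
      rw [hsum] at h0
      have h1 := congrArg (Nat.cast : ℕ → ℚ) h0
      push_cast at h1
      rw [prod_Icc_one n (fun j => ((r j).factorial : ℚ))] at h1
      exact h1
    have hFne : F ≠ 0 := Finset.prod_ne_zero_iff.mpr fun i _ =>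
      Nat.cast_ne_zero.mpr (Nat.factorial_ne_zero _)
    have hPne : P ≠ 0 := Finset.prod_ne_zero_iff.mpr fun i _ =>
      pow_ne_zero _ (Nat.cast_ne_zero.mpr (Nat.factorial_ne_zero _))
    have hmult : (Nat.multinomial (Finset.Icc 1 n) r : ℚ) ≠ 0 :=
      Nat.cast_ne_zero.mpr (Nat.multinomial_pos _ _).ne'
    have hq : (n.factorial : ℚ) * (Nat.multinomial (Finset.Icc 1 n) r : ℚ) / (k.factorial : ℚ)
        = (n.factorial : ℚ) / (F * P) * P := by
      rw [← hk']
      field_simp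
    rw [hD, ← hq]



theorem statement4 {R : Type*} [CommRing R] [Algebra ℚ R] (φ : PowerSeries R)
    (hφ0 : PowerSeries.constantCoeff φ = 0) (n k : ℕ) (hkn : k ≤ n) :
    (n.factorial : R) * PowerSeries.coeff n
        (PowerSeries.C (algebraMap ℚ R ((k.factorial : ℚ)⁻¹)) * φ ^ k) =
      bellPoly n k (fun j => (j.factorial : R) * PowerSeries.coeff j φ) := by
  classical
  have key : (n.factorial : R) * PowerSeries.coeff n
        (PowerSeries.C (algebraMap ℚ R ((k.factorial : ℚ)⁻¹)) * φ ^ k)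
      = ∑ r ∈ Finset.filter (fun r => ∑ i ∈ Finset.Icc 1 n, i * r i = n)
          (Finset.piAntidiag (Finset.Icc 1 n) k),
        algebraMap ℚ R ((n.factorial : ℚ) * (Nat.multinomial (Finset.Icc 1 n) r : ℚ)
            / (k.factorial : ℚ)) *
          ∏ i ∈ Finset.Icc 1 n, (PowerSeries.coeff i φ) ^ r i := by
    classical
    set a : ℕ → R := fun i => PowerSeries.coeff i φ with ha
    set S : PowerSeries R := ∑ i ∈ Finset.Icc 1 n, PowerSeries.C (a i) * X ^ i with hS
    have hcoeffS : ∀ m, PowerSeries.coeff m S = if m ∈ Finset.Icc 1 n then a m else 0 := by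
      intro m
      rw [hS, map_sum]
      rw [Finset.sum_congr rfl (fun i _ => show PowerSeries.coeff m (PowerSeries.C (a i) * X ^ i)
          = if m = i then a i else 0 by
        simp [PowerSeries.coeff_C_mul, PowerSeries.coeff_X_pow, mul_ite])]
      exact Finset.sum_ite_eq _ m a
    have hdvd : (X : PowerSeries R) ^ (n + 1) ∣ φ ^ k - S ^ k := by
      refine dvd_trans ?_ (sub_dvd_pow_sub_pow φ S k)
      rw [PowerSeries.X_pow_dvd_iff]
      intro m hm
      rw [map_sub, hcoeffS]
      rcases Nat.eq_zero_or_pos m with rfl | hm1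
      · simpa [a] using hφ0
      · rw [if_pos (Finset.mem_Icc.mpr ⟨hm1, Nat.lt_succ_iff.mp hm⟩)]; simp [a]
    have hcp : PowerSeries.coeff n (φ ^ k) = PowerSeries.coeff n (S ^ k) := by
      have := PowerSeries.X_pow_dvd_iff.mp hdvd n (Nat.lt_succ_self n)
      rw [map_sub, sub_eq_zero] at this; exact this
    have hterm : ∀ r : ℕ → ℕ, ∏ i ∈ Finset.Icc 1 n, (PowerSeries.C (a i) * X ^ i) ^ r i
        = PowerSeries.C (∏ i ∈ Finset.Icc 1 n, a i ^ r i)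
            * X ^ (∑ i ∈ Finset.Icc 1 n, i * r i) := by
      intro r
      rw [map_prod, ← Finset.prod_pow_eq_pow_sum, ← Finset.prod_mul_distrib]
      refine Finset.prod_congr rfl fun i _ => ?_
      rw [mul_pow, map_pow, pow_mul]
    have hpow : PowerSeries.coeff n (S ^ k)
        = ∑ r ∈ Finset.filter (fun r => ∑ i ∈ Finset.Icc 1 n, i * r i = n)
            (Finset.piAntidiag (Finset.Icc 1 n) k),
          (Nat.multinomial (Finset.Icc 1 n) r : R) * ∏ i ∈ Finset.Icc 1 n, a i ^ r i := by
      rw [hS, Finset.sum_pow_eq_sum_piAntidiag, map_sum, Finset.sum_filter]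
      refine Finset.sum_congr rfl fun r _ => ?_
      rw [hterm, ← map_natCast (PowerSeries.C (R := R)) (Nat.multinomial (Finset.Icc 1 n) r),
        ← mul_assoc, ← map_mul, PowerSeries.coeff_C_mul, PowerSeries.coeff_X_pow]
      by_cases h : ∑ i ∈ Finset.Icc 1 n, i * r i = n
      · rw [if_pos h, if_pos h.symm, mul_one]
      · rw [if_neg h, if_neg (fun hh => h hh.symm), mul_zero]
    rw [PowerSeries.coeff_C_mul, hcp, hpow, Finset.mul_sum, Finset.mul_sum]
    refine Finset.sum_congr rfl fun r hr => ?_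
    rw [div_eq_mul_inv, map_mul, map_mul, map_natCast, map_natCast]
    ring
  rw [key]
  exact step2 n k fun i => PowerSeries.coeff i φ
end

section
/- Let K be a field of characteristic zero, and let g and h be formal power series in K[[x]] with zero constant term such that h is the compositional inverse of g (in particular the linear coefficient g_1 = g'(0) is nonzero). Write g_j = j!·[x^j]g and h_j = j!·[x^j]h. Then for all integers n ≥ k ≥ 1, Σ_{j=k}^{n} B_{n,j}(h_1, …, h_{n−j+1}) · B_{j,k}(g_1, …, g_{j−k+1}) = δ_{n,k}, where δ_{n,n} = 1 and δ_{n,k} = 0 for n ≠ k. -/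
open PowerSeries

section Aux

open PowerSeries Finset

private lemma my_coeff_pow_zero_of_lt {K : Type*} [CommRing K] {h : PowerSeries K}
    (hh0 : constantCoeff h = 0) {n j : ℕ} (hnj : n < j) : coeff n (h ^ j) = 0 :=
  (X_pow_dvd_iff.mp (pow_dvd_pow_of_dvd (X_dvd_iff.mpr hh0) j)) n hnj

private lemma my_coeff_psComp {K : Type*} [CommRing K] (g h : PowerSeries K) (N : ℕ) :
    coeff N (psComp g h) =
      ∑ m ∈ range (N + 1), coeff m g * coeff N (h ^ m) := by
  simp [psComp]

private lemma my_psComp_one {K : Type*} [CommRing K] (h : PowerSeries K) : psComp 1 h = 1 := by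
  ext N
  rw [my_coeff_psComp]
  rcases Nat.eq_zero_or_pos N with rfl | hN
  · simp
  · rw [Finset.sum_eq_single 0] <;>
      simp +contextual [coeff_one, Nat.pos_iff_ne_zero.mp hN]

private lemma my_sum_antidiag_eq_sum_prod {M : Type*} [AddCommMonoid M] (N : ℕ) (F : ℕ × ℕ → M)
    (hF : ∀ q : ℕ × ℕ, N < q.1 + q.2 → F q = 0) :
    ∑ m ∈ range (N+1), ∑ p ∈ antidiagonal m, F p =
      ∑ q ∈ range (N+1) ×ˢ range (N+1), F q := by
  have h1 : ∑ q ∈ range (N+1) ×ˢ range (N+1), F q =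
      ∑ q ∈ (range (N+1) ×ˢ range (N+1)).filter (fun q => q.1 + q.2 ≤ N), F q := by
    refine (Finset.sum_subset (filter_subset _ _) fun q hqt hq => ?_).symm
    exact hF q (by simp only [mem_filter, not_and, not_le] at hq; exact hq hqt)
  rw [h1, ← Finset.sum_fiberwise_of_maps_to (g := fun q : ℕ × ℕ => q.1 + q.2)
    (t := range (N+1)) (fun q hq => by simp only [mem_filter] at hq; simp; omega)]
  refine Finset.sum_congr rfl fun m hm => Finset.sum_congr ?_ fun _ _ => rfl
  ext q
  simp only [mem_filter, mem_product, mem_range, HasAntidiagonal.mem_antidiagonal] at *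
  omega

private lemma my_psComp_mul {K : Type*} [CommRing K] (A B h : PowerSeries K)
    (hh0 : constantCoeff h = 0) :
    psComp (A * B) h = psComp A h * psComp B h := by
  ext N
  have hR : coeff N (psComp A h * psComp B h) =
      ∑ q ∈ range (N+1) ×ˢ range (N+1),
        coeff q.1 A * coeff q.2 B * coeff N (h ^ (q.1 + q.2)) := by
    rw [coeff_mul]
    have hext : ∀ p ∈ antidiagonal N,
        coeff p.1 (psComp A h) * coeff p.2 (psComp B h) =
        (∑ i ∈ range (N+1), coeff i A * coeff p.1 (h ^ i)) *
          (∑ j ∈ range (N+1), coeff j B * coeff p.2 (h ^ j)) := by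
      intro p hp
      rw [HasAntidiagonal.mem_antidiagonal] at hp
      rw [my_coeff_psComp, my_coeff_psComp]
      congr 1
      · refine Finset.sum_subset (Finset.range_subset_range.mpr (by omega)) fun i _ hi => ?_
        rw [my_coeff_pow_zero_of_lt hh0 (by simp at hi ⊢; omega), mul_zero]
      · refine Finset.sum_subset (Finset.range_subset_range.mpr (by omega)) fun j _ hj => ?_
        rw [my_coeff_pow_zero_of_lt hh0 (by simp at hj ⊢; omega), mul_zero]
    rw [Finset.sum_congr rfl hext]
    simp_rw [Finset.sum_mul_sum]
    rw [Finset.sum_comm]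
    rw [Finset.sum_product]
    refine Finset.sum_congr rfl fun i _ => ?_
    rw [Finset.sum_comm]
    refine Finset.sum_congr rfl fun j _ => ?_
    rw [pow_add, coeff_mul, Finset.mul_sum]
    exact Finset.sum_congr rfl fun p _ => by ring
  rw [hR, my_coeff_psComp]
  rw [← my_sum_antidiag_eq_sum_prod N _
    (fun q hq => by rw [my_coeff_pow_zero_of_lt hh0 hq, mul_zero])]
  refine Finset.sum_congr rfl fun m _ => ?_
  rw [coeff_mul, Finset.sum_mul]
  exact Finset.sum_congr rfl fun p hp => by
    rw [HasAntidiagonal.mem_antidiagonal] at hp; rw [hp]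

private lemma my_psComp_pow {K : Type*} [CommRing K] (g h : PowerSeries K)
    (hh0 : constantCoeff h = 0) (k : ℕ) :
    psComp (g ^ k) h = (psComp g h) ^ k := by
  induction k with
  | zero => simpa using my_psComp_one h
  | succ k ih => rw [pow_succ, my_psComp_mul _ _ _ hh0, ih, pow_succ]

private lemma my_coeff_pow_congr {K : Type*} [CommRing K] {f g : PowerSeries K} {n : ℕ}
    (hfg : ∀ m ≤ n, coeff m f = coeff m g) (k : ℕ) :
    ∀ m ≤ n, coeff m (f ^ k) = coeff m (g ^ k) := by
  induction k with
  | zero => intro m _; rfl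
  | succ k ih =>
    intro m hm
    rw [pow_succ, pow_succ, coeff_mul, coeff_mul]
    refine Finset.sum_congr rfl fun p hp => ?_
    rw [HasAntidiagonal.mem_antidiagonal] at hp
    rw [ih p.1 (by omega), hfg p.2 (by omega)]

private lemma my_bell_eq {K : Type*} [Field K] [CharZero K] (f : PowerSeries K)
    (hf : constantCoeff f = 0) {n k : ℕ} (hkn : k ≤ n) :
    bellPoly n k (fun s => (s.factorial : K) * coeff s f) =
      (n.factorial : K) * ((k.factorial : K))⁻¹ * coeff n (f ^ k) := by
  set a : ℕ → K := fun s => coeff s f with ha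
  have keyS : ∀ (r : Fin n → ℕ) (F : ℕ → ℕ → ℕ),
      ∑ i ∈ range n, F i (if h : i < n then r ⟨i, h⟩ else 0) = ∑ i : Fin n, F i.1 (r i) := by
    intro r F
    rw [Finset.sum_range]
    exact Finset.sum_congr rfl fun i _ => by rw [dif_pos i.2]
  have keyP : ∀ (r : Fin n → ℕ) (F : ℕ → ℕ → K),
      ∏ i ∈ range n, F i (if h : i < n then r ⟨i, h⟩ else 0) = ∏ i : Fin n, F i.1 (r i) := by
    intro r F
    rw [Finset.prod_range]
    exact Finset.prod_congr rfl fun i _ => by rw [dif_pos i.2]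
  set T : PowerSeries K := ∑ i ∈ range n, C (a (i+1)) * X ^ (i+1) with hT
  have hagree : ∀ m ≤ n, coeff m f = coeff m T := by
    intro m hm
    rw [hT, map_sum]
    simp_rw [coeff_C_mul, coeff_X_pow, mul_ite, mul_one, mul_zero]
    rcases Nat.eq_zero_or_pos m with rfl | hm1
    · rw [Finset.sum_eq_zero fun i _ => if_neg (by omega)]
      simpa [coeff_zero_eq_constantCoeff] using hf
    · rw [Finset.sum_eq_single_of_mem (m-1) (Finset.mem_range.mpr (by omega))
        (fun i hi hne => if_neg (show ¬ m = i + 1 by omega)),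
        if_pos (show m = m - 1 + 1 by omega)]
      show coeff m f = a (m - 1 + 1)
      rw [show m - 1 + 1 = m from by omega]
  have hTn : coeff n (f ^ k) = coeff n (T ^ k) :=
    my_coeff_pow_congr hagree k n le_rfl
  rw [hTn, hT, Finset.sum_pow_eq_sum_piAntidiag, map_sum, Finset.mul_sum]
  have hterm : ∀ r ∈ piAntidiag (range n) k,
      (n.factorial : K) * ((k.factorial : K))⁻¹ *
        coeff n ((Nat.multinomial (range n) r : PowerSeries K) *
          ∏ i ∈ range n, (C (a (i+1)) * X ^ (i+1)) ^ (r i)) =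
      if n = ∑ i ∈ range n, (i+1) * r i then
        (n.factorial : K) * ((k.factorial : K))⁻¹ *
          ((Nat.multinomial (range n) r : K) * ∏ i ∈ range n, a (i+1) ^ (r i))
      else 0 := by
    intro r _
    have hprod : ∏ i ∈ range n, (C (a (i+1)) * X ^ (i+1)) ^ (r i) =
        C (∏ i ∈ range n, a (i+1) ^ (r i)) * X ^ (∑ i ∈ range n, (i+1) * r i) := by
      simp_rw [mul_pow, ← map_pow, ← pow_mul]
      rw [Finset.prod_mul_distrib, ← map_prod, Finset.prod_pow_eq_pow_sum]
    rw [hprod, ← map_natCast (C (R := K)) (Nat.multinomial (range n) r), ← mul_assoc, ← map_mul,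
      coeff_C_mul, coeff_X_pow]
    split
    · ring
    · ring
  rw [Finset.sum_congr rfl hterm, Finset.sum_ite, Finset.sum_const_zero, add_zero]
  rw [bellPoly]
  refine Finset.sum_nbij' (i := fun r i => if h : i < n then r ⟨i, h⟩ else 0)
    (j := fun r (i : Fin n) => r i.1) ?_ ?_ ?_ ?_ ?_
  · intro r hr
    simp only [Finset.mem_filter, Fintype.mem_piFinset, Finset.mem_range] at hr
    obtain ⟨_, hsum, hwt⟩ := hr
    simp only [Finset.mem_filter, Finset.mem_piAntidiag]
    refine ⟨⟨?_, ?_⟩, ?_⟩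
    · show ∑ i ∈ range n, (if h : i < n then r ⟨i, h⟩ else 0) = k
      rw [keyS r (fun _ x => x)]; exact hsum
    · intro i hi
      by_contra hmem
      simp only [dif_neg (fun h => hmem (Finset.mem_range.mpr h))] at hi
      exact hi rfl
    · show n = ∑ i ∈ range n, (i+1) * (if h : i < n then r ⟨i, h⟩ else 0)
      rw [keyS r (fun i x => (i+1) * x)]; exact hwt.symm
  · intro r hr
    simp only [Finset.mem_filter, Finset.mem_piAntidiag] at hr
    obtain ⟨⟨hsum, hsupp⟩, hwt⟩ := hr
    have hsum' : ∑ j ∈ range n, r j = k := hsum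
    simp only [Finset.mem_filter, Fintype.mem_piFinset, Finset.mem_range]
    refine ⟨fun i => ?_, ?_, ?_⟩
    · have : r i.1 ≤ ∑ j ∈ range n, r j :=
        Finset.single_le_sum (f := r) (fun j _ => Nat.zero_le _)
          (Finset.mem_range.mpr i.2)
      omega
    · rw [Finset.sum_range fun j => r j] at hsum'; exact hsum'
    · rw [show (∑ i : Fin n, (i.1+1) * r i.1) = ∑ i ∈ range n, (i+1) * r i from
        (Finset.sum_range (fun j => (j+1) * r j)).symm]
      exact hwt.symm
  · intro r hr
    funext i
    simp [i.2]
  · intro r hr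
    simp only [Finset.mem_filter, Finset.mem_piAntidiag] at hr
    obtain ⟨⟨hsum, hsupp⟩, hwt⟩ := hr
    funext i
    by_cases h : i < n
    · simp [h]
    · simp only [dif_neg h]
      by_contra hne
      exact h (Finset.mem_range.mp (hsupp i fun h0 => hne h0.symm))
  · intro r hr
    simp only [Finset.mem_filter, Fintype.mem_piFinset, Finset.mem_range] at hr
    obtain ⟨hbd, hsum, hwt⟩ := hr
    rw [keyP r (fun i x => a (i+1) ^ x)]
    have hmulteq : ∑ i ∈ range n, (if h : i < n then r ⟨i, h⟩ else 0) = k := by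
      rw [keyS r (fun _ x => x)]; exact hsum
    have hspec := Nat.multinomial_spec (range n) (fun i => if h : i < n then r ⟨i, h⟩ else 0)
    rw [hmulteq] at hspec
    have hfacs : (∏ i ∈ range n, (if h : i < n then r ⟨i, h⟩ else 0).factorial)
        = ∏ i : Fin n, (r i).factorial := by
      rw [Finset.prod_range]
      exact Finset.prod_congr rfl fun i _ => by rw [dif_pos i.2]
    set M : ℕ := Nat.multinomial (range n) (fun i => if h : i < n then r ⟨i, h⟩ else 0) with hM
    have hspecK : (∏ i : Fin n, ((r i).factorial : K)) * (M : K) = (k.factorial : K) := by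
      rw [← Nat.cast_prod, ← Nat.cast_mul, ← hfacs, hspec]
    rw [eq_ratCast (algebraMap ℚ K) _]
    push_cast
    set P : K := ∏ i : Fin n, ((r i).factorial : K) with hP
    set Q : K := ∏ i : Fin n, (((i.1+1).factorial : K)) ^ (r i) with hQ
    set A : K := ∏ i : Fin n, a (i.1+1) ^ (r i) with hA
    have hsplit : ∏ i : Fin n, (((r i).factorial : K) * ((i.1+1).factorial : K) ^ (r i))
        = P * Q := Finset.prod_mul_distrib
    have hsplit2 : ∏ i : Fin n, (((i.1+1).factorial : K) * a (i.1+1)) ^ (r i) = Q * A := by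
      simp_rw [mul_pow]; exact Finset.prod_mul_distrib
    have hPne : P ≠ 0 := Finset.prod_ne_zero_iff.mpr
      fun i _ => Nat.cast_ne_zero.mpr (Nat.factorial_ne_zero _)
    have hQne : Q ≠ 0 := Finset.prod_ne_zero_iff.mpr
      fun i _ => pow_ne_zero _ (Nat.cast_ne_zero.mpr (Nat.factorial_ne_zero _))
    have hkne : (k.factorial : K) ≠ 0 := Nat.cast_ne_zero.mpr (Nat.factorial_ne_zero _)
    rw [hsplit, hsplit2]
    field_simp
    linear_combination (-(n.factorial : K) * A) * hspecK

end Aux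

theorem statement5 {K : Type*} [Field K] [CharZero K] (g h : PowerSeries K)
    (hg0 : PowerSeries.constantCoeff g = 0) (hh0 : PowerSeries.constantCoeff h = 0)
    (hinv1 : psComp g h = PowerSeries.X) (hinv2 : psComp h g = PowerSeries.X)
    (n k : ℕ) (hk : 1 ≤ k) (hkn : k ≤ n) :
    ∑ j ∈ Finset.Icc k n,
        bellPoly n j (fun s => (s.factorial : K) * PowerSeries.coeff s h) *
          bellPoly j k (fun s => (s.factorial : K) * PowerSeries.coeff s g) =
      if n = k then 1 else 0 := by
  have hstep : ∀ j ∈ Finset.Icc k n,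
      bellPoly n j (fun s => (s.factorial : K) * PowerSeries.coeff s h) *
        bellPoly j k (fun s => (s.factorial : K) * PowerSeries.coeff s g) =
      (n.factorial : K) * ((k.factorial : K))⁻¹ *
        (PowerSeries.coeff j (g ^ k) * PowerSeries.coeff n (h ^ j)) := by
    intro j hj
    rw [Finset.mem_Icc] at hj
    rw [my_bell_eq h hh0 hj.2, my_bell_eq g hg0 hj.1]
    have hjne : (j.factorial : K) ≠ 0 := Nat.cast_ne_zero.mpr (Nat.factorial_ne_zero _)
    field_simp
  rw [Finset.sum_congr rfl hstep, ← Finset.mul_sum]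
  have hsub : ∑ j ∈ Finset.Icc k n,
        PowerSeries.coeff j (g ^ k) * PowerSeries.coeff n (h ^ j) =
      ∑ j ∈ Finset.range (n+1),
        PowerSeries.coeff j (g ^ k) * PowerSeries.coeff n (h ^ j) := by
    refine Finset.sum_subset (fun j hj => ?_) (fun j hj hnot => ?_)
    · rw [Finset.mem_Icc] at hj
      exact Finset.mem_range.mpr (by omega)
    · rw [Finset.mem_range] at hj
      rw [Finset.mem_Icc] at hnot
      rw [my_coeff_pow_zero_of_lt hg0 (by omega), zero_mul]
  rw [hsub, ← my_coeff_psComp, my_psComp_pow g h hh0 k, hinv1, PowerSeries.coeff_X_pow]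
  by_cases hnk : n = k
  · rw [if_pos hnk, mul_one, hnk,
      mul_inv_cancel₀ (Nat.cast_ne_zero.mpr (Nat.factorial_ne_zero k))]
  · rw [if_neg hnk, mul_zero]
end
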